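/- Let M be an irreducible nonnegative n×n real matrix, let u ∈ ℝⁿ be a vector with all coordinates positive, and let λ ∈ ℝ. If Mu ≥ λu entrywise and Mu ≠ λu, then ρ(M) > λ. -/

import Mathlib

open scoped NNReal ENNReal

open Polynomial in
lemma PF_mem_spectrum_iff_isRoot_charpoly {n : ℕ}
    (A : Matrix (Fin n) (Fin n) ℂ) (z : ℂ) :
    z ∈ spectrum ℂ A ↔ A.charpoly.IsRoot z := by
  have h1 : (Matrix.charmatrix A).map (Polynomial.eval z) =
      z • (1 : Matrix (Fin n) (Fin n) ℂ) - A := by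
    ext i j
    by_cases h : i = j <;>
      simp [Matrix.charmatrix_apply, Matrix.map_apply, Matrix.sub_apply, h,
        Matrix.one_apply, Matrix.smul_apply, Matrix.diagonal_apply]
  have h2 : A.charpoly.eval z = (z • (1 : Matrix (Fin n) (Fin n) ℂ) - A).det := by
    rw [Matrix.charpoly, ← h1]
    exact (RingHom.map_det (Polynomial.evalRingHom z) _)
  rw [spectrum.mem_iff, Algebra.algebraMap_eq_smul_one,
    Matrix.isUnit_iff_isUnit_det, isUnit_iff_ne_zero, not_not, Polynomial.IsRoot, h2]

attribute [local instance] Matrix.linftyOpNormedRing Matrix.linftyOpNormedAlgebra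

noncomputable instance PF_complete (n : ℕ) : CompleteSpace (Matrix (Fin n) (Fin n) ℂ) :=
  inferInstanceAs (CompleteSpace (Fin n → Fin n → ℂ))

lemma PF_pow_nonneg' {n : ℕ} {M : Matrix (Fin n) (Fin n) ℝ}
    (h : ∀ i j, 0 ≤ M i j) (k : ℕ) : ∀ i j, 0 ≤ (M ^ k) i j := by
  induction k with
  | zero => intro i j; by_cases hij : i = j <;> simp [Matrix.one_apply, hij]
  | succ k ih =>
      intro i j
      rw [pow_succ, Matrix.mul_apply]
      exact Finset.sum_nonneg fun l _ => mul_nonneg (ih i l) (h l j)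

open Polynomial in
lemma PF_exists_root_ge {n : ℕ} (hn : 1 ≤ n) (M : Matrix (Fin n) (Fin n) ℝ)
    (hnonneg : ∀ i j, 0 ≤ M i j)
    (v : Fin n → ℝ) (hv : ∀ i, 0 < v i) (μ : ℝ) (hμ0 : 0 ≤ μ)
    (hμ : ∀ i, μ * v i ≤ M.mulVec v i) :
    ∃ z : ℂ, (M.map (Complex.ofReal : ℝ → ℂ)).charpoly.IsRoot z ∧ μ ≤ ‖z‖ := by
  haveI : NeZero n := ⟨by omega⟩
  set A := M.map (Complex.ofReal : ℝ → ℂ) with hA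
  -- powers
  have hpowv : ∀ k i, μ ^ k * v i ≤ (M ^ k).mulVec v i := by
    intro k
    induction k with
    | zero => intro i; simp [Matrix.one_mulVec]
    | succ k ih =>
        intro i
        have h1 : (M ^ (k + 1)).mulVec v i = M.mulVec ((M ^ k).mulVec v) i := by
          rw [pow_succ', Matrix.mulVec_mulVec]
        rw [h1]
        have h2 : ∀ j, μ ^ k * v j ≤ (M ^ k).mulVec v j := ih
        have h3 : M.mulVec (fun j => μ ^ k * v j) i ≤ M.mulVec ((M ^ k).mulVec v) i := by
          unfold Matrix.mulVec dotProduct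
          exact Finset.sum_le_sum fun j _ => mul_le_mul_of_nonneg_left (h2 j) (hnonneg i j)
        have h4 : M.mulVec (fun j => μ ^ k * v j) i = μ ^ k * M.mulVec v i := by
          unfold Matrix.mulVec dotProduct
          rw [Finset.mul_sum]; exact Finset.sum_congr rfl fun j _ => by ring
        calc μ ^ (k+1) * v i = μ ^ k * (μ * v i) := by ring
          _ ≤ μ ^ k * M.mulVec v i := by
              exact mul_le_mul_of_nonneg_left (hμ i) (pow_nonneg hμ0 k)
          _ = M.mulVec (fun j => μ ^ k * v j) i := h4.symm
          _ ≤ _ := h3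
  -- A^k entries
  have hAk : ∀ k : ℕ, A ^ k = (M ^ k).map (Complex.ofReal : ℝ → ℂ) := by
    intro k
    have := map_pow (Complex.ofRealHom.mapMatrix : Matrix (Fin n) (Fin n) ℝ →+* _) M k
    exact this.symm
  -- argmax of v
  obtain ⟨i₀, -, hi₀⟩ := Finset.exists_max_image (Finset.univ : Finset (Fin n)) v
    ⟨⟨0, by omega⟩, Finset.mem_univ _⟩
  -- norm lower bound
  have hnorm : ∀ k : ℕ, μ ^ k ≤ ‖A ^ k‖ := by
    intro k
    have hrow : ∑ j, (M ^ k) i₀ j * (v j / v i₀) ≤ ∑ j, (M ^ k) i₀ j := by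
      refine Finset.sum_le_sum fun j _ => ?_
      have : v j / v i₀ ≤ 1 := (div_le_one (hv i₀)).2 (hi₀ j (Finset.mem_univ j))
      nlinarith [PF_pow_nonneg' hnonneg k i₀ j, (hv j).le]
    have hsum : μ ^ k ≤ ∑ j, (M ^ k) i₀ j := by
      have : (∑ j, (M ^ k) i₀ j * v j) / v i₀ = ∑ j, (M ^ k) i₀ j * (v j / v i₀) := by
        rw [Finset.sum_div]; exact Finset.sum_congr rfl fun j _ => by ring
      have h5 : μ ^ k ≤ ((M ^ k).mulVec v i₀) / v i₀ := by
        rw [le_div_iff₀ (hv i₀)]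
        exact hpowv k i₀
      have h6 : (M ^ k).mulVec v i₀ = ∑ j, (M ^ k) i₀ j * v j := rfl
      calc μ ^ k ≤ ((M ^ k).mulVec v i₀) / v i₀ := h5
        _ = ∑ j, (M ^ k) i₀ j * (v j / v i₀) := by rw [h6, this]
        _ ≤ _ := hrow
    have hnrm : (∑ j, ‖(A ^ k) i₀ j‖₊ : ℝ≥0) ≤ ‖A ^ k‖₊ := by
      rw [Matrix.linfty_opNNNorm_def]
      exact Finset.le_sup (f := fun i => ∑ j, ‖(A ^ k) i j‖₊) (Finset.mem_univ i₀)
    have hentry : ∀ j, ‖(A ^ k) i₀ j‖ = (M ^ k) i₀ j := by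
      intro j
      rw [hAk k]
      simp [Matrix.map_apply, Complex.norm_real, Real.norm_eq_abs,
        abs_of_nonneg (PF_pow_nonneg' hnonneg k i₀ j)]
    calc μ ^ k ≤ ∑ j, (M ^ k) i₀ j := hsum
      _ = ∑ j, ‖(A ^ k) i₀ j‖ := by exact Finset.sum_congr rfl fun j _ => (hentry j).symm
      _ ≤ ‖A ^ k‖ := by
          have := hnrm
          have h7 : ((∑ j, ‖(A ^ k) i₀ j‖₊ : ℝ≥0) : ℝ) ≤ ‖A ^ k‖ := by
            exact_mod_cast this
          simpa [NNReal.coe_sum, coe_nnnorm] using h7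
  -- Gelfand
  set μnn : NNReal := ⟨μ, hμ0⟩ with hμnn
  have htend := spectrum.pow_nnnorm_pow_one_div_tendsto_nhds_spectralRadius A
  have hle : (μnn : ENNReal) ≤ spectralRadius ℂ A := by
    refine ge_of_tendsto htend ?_
    filter_upwards [Filter.eventually_ge_atTop 1] with k hk
    have h8 : (μnn : ENNReal) ^ (k : ℕ) ≤ (‖A ^ k‖₊ : ENNReal) := by
      have : μnn ^ k ≤ ‖A ^ k‖₊ := by
        have := hnorm k
        rw [← NNReal.coe_le_coe]
        push_cast
        exact this
      exact_mod_cast this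
    calc (μnn : ENNReal) = ((μnn : ENNReal) ^ (k : ℕ)) ^ (1 / (k : ℝ)) := by
          rw [← ENNReal.rpow_natCast, ← ENNReal.rpow_mul,
            mul_one_div_cancel (Nat.cast_ne_zero.2 (by omega) : (k : ℝ) ≠ 0),
            ENNReal.rpow_one]
      _ ≤ (‖A ^ k‖₊ : ENNReal) ^ (1 / (k : ℝ)) := by
          exact ENNReal.rpow_le_rpow h8 (by positivity)
  -- spectrum nonempty
  have hdeg : 0 < A.charpoly.degree := by
    rw [Matrix.charpoly_degree_eq_dim]
    simp only [Fintype.card_fin]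
    exact_mod_cast hn
  obtain ⟨z₁, hz₁⟩ := Complex.exists_root hdeg
  have hne : (spectrum ℂ A).Nonempty :=
    ⟨z₁, (PF_mem_spectrum_iff_isRoot_charpoly A z₁).2 hz₁⟩
  obtain ⟨z₀, hz₀mem, hz₀⟩ := spectrum.exists_nnnorm_eq_spectralRadius_of_nonempty hne
  refine ⟨z₀, (PF_mem_spectrum_iff_isRoot_charpoly A z₀).1 hz₀mem, ?_⟩
  have : (μnn : ENNReal) ≤ (‖z₀‖₊ : ENNReal) := hz₀ ▸ hle
  have h9 : μnn ≤ ‖z₀‖₊ := by exact_mod_cast this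
  have := NNReal.coe_le_coe.2 h9
  exact this

lemma PF_exists_pos_strict {n : ℕ}
    (M : Matrix (Fin n) (Fin n) ℝ)
    (hnonneg : ∀ i j, 0 ≤ M i j)
    (hirr : ∀ i j, ∃ k : ℕ, 1 ≤ k ∧ 0 < (M ^ k) i j)
    (u : Fin n → ℝ) (hu : ∀ i, 0 < u i) (lam : ℝ)
    (hge : ∀ i, lam * u i ≤ M.mulVec u i)
    (hne : M.mulVec u ≠ fun i => lam * u i) :
    ∃ v : Fin n → ℝ, (∀ i, 0 < v i) ∧ ∀ i, lam * v i < M.mulVec v i := by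
  set w : Fin n → ℝ := fun i => M.mulVec u i - lam * u i with hw_def
  have hw : ∀ i, 0 ≤ w i := fun i => sub_nonneg.2 (hge i)
  obtain ⟨j₀, hj₀⟩ : ∃ j, 0 < w j := by
    obtain ⟨i, hi⟩ := Function.ne_iff.1 hne
    exact ⟨i, lt_of_le_of_ne (hw i) (fun h => hi (by simp [hw_def] at h ⊢; linarith [h.symm]))⟩
  choose k hk1 hk2 using fun i => hirr i j₀
  set K := Finset.univ.sup k with hK
  set B := ∑ m ∈ Finset.range (K + 1), M ^ m with hB_def
  have hB_apply : ∀ i j, B i j = ∑ m ∈ Finset.range (K + 1), (M ^ m) i j := by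
    intro i j; rw [hB_def]; simp [Matrix.sum_apply]
  have hB : ∀ i j, 0 ≤ B i j := fun i j => by
    rw [hB_apply]
    exact Finset.sum_nonneg fun m _ => PF_pow_nonneg' hnonneg m i j
  have hBj₀ : ∀ i, 0 < B i j₀ := by
    intro i
    rw [hB_apply]
    refine Finset.sum_pos' (fun m _ => PF_pow_nonneg' hnonneg m i j₀) ⟨k i, ?_, hk2 i⟩
    exact Finset.mem_range.2 (Nat.lt_succ_of_le (Finset.le_sup (Finset.mem_univ i)))
  have hBdiag : ∀ i, 0 < B i i := by
    intro i
    rw [hB_apply]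
    refine Finset.sum_pos' (fun m _ => PF_pow_nonneg' hnonneg m i i) ⟨0, ?_, by simp [Matrix.one_apply]⟩
    simp
  refine ⟨B.mulVec u, fun i => ?_, fun i => ?_⟩
  · refine Finset.sum_pos' (fun j _ => mul_nonneg (hB i j) (hu j).le) ⟨i, Finset.mem_univ i, mul_pos (hBdiag i) (hu i)⟩
  · have hcomm : M * B = B * M := by
      rw [hB_def, Finset.mul_sum, Finset.sum_mul]
      exact Finset.sum_congr rfl fun m _ => (Commute.pow_right (Commute.refl M) m).eq
    have key : M.mulVec (B.mulVec u) i - lam * B.mulVec u i = B.mulVec w i := by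
      have h1 : M.mulVec (B.mulVec u) = B.mulVec (M.mulVec u) := by
        rw [Matrix.mulVec_mulVec, Matrix.mulVec_mulVec, hcomm]
      rw [h1]
      have : B.mulVec w = B.mulVec (M.mulVec u) - lam • B.mulVec u := by
        have : w = M.mulVec u - lam • u := by ext j; simp [hw_def]
        rw [this, Matrix.mulVec_sub, Matrix.mulVec_smul]
      rw [this]
      simp
    have hpos : 0 < B.mulVec w i :=
      Finset.sum_pos' (fun j _ => mul_nonneg (hB i j) (hw j))
        ⟨j₀, Finset.mem_univ j₀, mul_pos (hBj₀ i) hj₀⟩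
    linarith [key ▸ hpos]
/-- If M is an irreducible nonnegative n×n real matrix, u a
positive vector and λ a real with Mu ≥ λu and Mu ≠ λu, then the spectral
radius of M (the maximum modulus of the complex roots of its characteristic
polynomial) is > λ. -/
theorem spectral_radius_gt_of_strict_superEigen
    (n : ℕ) (hn : 1 ≤ n) (M : Matrix (Fin n) (Fin n) ℝ)
    (hnonneg : ∀ i j, 0 ≤ M i j)
    (hirr : ∀ i j, ∃ k : ℕ, 1 ≤ k ∧ 0 < (M ^ k) i j)
    (u : Fin n → ℝ) (hu : ∀ i, 0 < u i) (lam : ℝ)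
    (hge : ∀ i, lam * u i ≤ M.mulVec u i)
    (hne : M.mulVec u ≠ fun i => lam * u i) :
    lam < sSup {x : ℝ | ∃ z : ℂ,
      ((M.map (Complex.ofReal : ℝ → ℂ)).charpoly).IsRoot z ∧
      ‖z‖ = x} := by
  haveI : NeZero n := ⟨by omega⟩
  obtain ⟨v, hv, hstrict⟩ := PF_exists_pos_strict M hnonneg hirr u hu lam hge hne
  have huniv : (Finset.univ : Finset (Fin n)).Nonempty := Finset.univ_nonempty
  set μ : ℝ := Finset.univ.inf' huniv (fun i => M.mulVec v i / v i) with hμdef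
  have hlamμ : lam < μ := by
    rw [hμdef, Finset.lt_inf'_iff]
    intro i _
    rw [lt_div_iff₀ (hv i)]
    simpa [mul_comm] using hstrict i
  have hμ0 : 0 ≤ μ := by
    rw [hμdef]
    refine Finset.le_inf' huniv _ fun i _ => div_nonneg ?_ (hv i).le
    have : M.mulVec v i = ∑ j, M i j * v j := rfl
    rw [this]
    exact Finset.sum_nonneg fun j _ => mul_nonneg (hnonneg i j) (hv j).le
  have hμv : ∀ i, μ * v i ≤ M.mulVec v i := by
    intro i
    have h1 : μ ≤ M.mulVec v i / v i := Finset.inf'_le _ (Finset.mem_univ i)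
    exact (le_div_iff₀ (hv i)).1 h1
  obtain ⟨z, hz_root, hz_ge⟩ := PF_exists_root_ge hn M hnonneg v hv μ hμ0 hμv
  set S := {x : ℝ | ∃ z : ℂ,
      ((M.map (Complex.ofReal : ℝ → ℂ)).charpoly).IsRoot z ∧ ‖z‖ = x} with hS
  have hSeq : S = (fun w : ℂ => ‖w‖) '' {w : ℂ | ((M.map (Complex.ofReal : ℝ → ℂ)).charpoly).IsRoot w} := by
    ext x
    simp [hS, Set.mem_image, and_comm, eq_comm]
  have hSfin : S.Finite := by
    rw [hSeq]
    exact Set.Finite.image _ (Polynomial.finite_setOf_isRoot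
      (Matrix.charpoly_monic _).ne_zero)
  have hmem : ‖z‖ ∈ S := ⟨z, hz_root, rfl⟩
  calc lam < μ := hlamμ
    _ ≤ ‖z‖ := hz_ge
    _ ≤ sSup S := le_csSup hSfin.bddAbove hmem
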